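/- Let N be a positive integer and let c : Fin (4N) → Bool be a coloring of 4N beads (arranged in a row) such that exactly 2N beads have color true. Then there exists an index i with i + 2N ≤ 4N such that the window of 2N consecutive beads starting at i, i.e. the beads with indices i, i+1, …, i+2N−1, contains exactly N beads of color true (and hence exactly N of color false). -/
import Mathlib

private lemma ivt_up (f : ℕ → ℕ) (N b : ℕ)
    (hstep : ∀ n, n + 1 ≤ b → f (n + 1) ≤ f n + 1)
    (h1 : f 0 ≤ N) (h2 : N ≤ f b) : ∃ i, i ≤ b ∧ f i = N := by
  induction b with
  | zero => exact ⟨0, le_refl 0, le_antisymm h1 h2⟩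
  | succ b ih =>
    by_cases hb : N ≤ f b
    · obtain ⟨i, hi, hfi⟩ := ih (fun n hn => hstep n (by omega)) hb
      exact ⟨i, by omega, hfi⟩
    · refine ⟨b + 1, le_refl _, ?_⟩
      have := hstep b (le_refl _)
      omega

private lemma ivt_down (f : ℕ → ℕ) (N b : ℕ)
    (hstep : ∀ n, n + 1 ≤ b → f n ≤ f (n + 1) + 1)
    (h1 : N ≤ f 0) (h2 : f b ≤ N) : ∃ i, i ≤ b ∧ f i = N := by
  induction b with
  | zero => exact ⟨0, le_refl 0, le_antisymm h2 h1⟩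
  | succ b ih =>
    by_cases hb : f b ≤ N
    · obtain ⟨i, hi, hfi⟩ := ih (fun n hn => hstep n (by omega)) hb
      exact ⟨i, by omega, hfi⟩
    · refine ⟨b + 1, le_refl _, ?_⟩
      have := hstep b (le_refl _)
      omega

/-- The necklace-of-pearls theorem (row version): given `4N` beads colored so that
exactly `2N` are `true`, there is a window of `2N` consecutive beads containing
exactly `N` beads of color `true`. -/
theorem necklace_window
    (N : ℕ) (hN : 0 < N) (c : Fin (4 * N) → Bool)
    (hc : (Finset.univ.filter (fun j : Fin (4 * N) => c j = true)).card = 2 * N) :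
    ∃ i : ℕ, i + 2 * N ≤ 4 * N ∧
      (Finset.univ.filter (fun j : Fin (4 * N) =>
        c j = true ∧ i ≤ (j : ℕ) ∧ (j : ℕ) < i + 2 * N)).card = N := by
  set f : ℕ → ℕ := fun i => (Finset.univ.filter (fun j : Fin (4 * N) =>
        c j = true ∧ i ≤ (j : ℕ) ∧ (j : ℕ) < i + 2 * N)).card with hf
  -- the two halves partition the true beads
  have hsum : f 0 + f (2 * N) = 2 * N := by
    have hdisj : Disjoint
        (Finset.univ.filter (fun j : Fin (4 * N) => c j = true ∧ 0 ≤ (j : ℕ) ∧ (j : ℕ) < 0 + 2 * N))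
        (Finset.univ.filter (fun j : Fin (4 * N) => c j = true ∧ 2 * N ≤ (j : ℕ) ∧ (j : ℕ) < 2 * N + 2 * N)) := by
      rw [Finset.disjoint_left]
      rintro j hj
      simp only [Finset.mem_filter, Finset.mem_univ, true_and, not_and] at hj ⊢
      intro _ h2
      omega
    have key : f 0 + f (2 * N) =
        (Finset.univ.filter (fun j : Fin (4 * N) => c j = true)).card := by
      rw [hf]
      simp only
      rw [← Finset.card_union_of_disjoint hdisj]
      congr 1
      ext j
      simp only [Finset.mem_union, Finset.mem_filter, Finset.mem_univ, true_and]
      constructor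
      · rintro (⟨h, _⟩ | ⟨h, _⟩) <;> exact h
      · intro h
        rcases lt_or_ge (j : ℕ) (2 * N) with hj | hj
        · exact Or.inl ⟨h, by omega⟩
        · exact Or.inr ⟨h, hj, by omega⟩
    omega
  -- consecutive windows differ by at most one
  have hstep : ∀ i, i + 1 ≤ 2 * N →
      (f (i + 1) ≤ f i + 1 ∧ f i ≤ f (i + 1) + 1) := by
    intro i hi
    set mid : Finset (Fin (4 * N)) := Finset.univ.filter (fun j : Fin (4 * N) =>
        c j = true ∧ i + 1 ≤ (j : ℕ) ∧ (j : ℕ) < i + 2 * N) with hmid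
    have hi4 : i < 4 * N := by omega
    have hi4' : i + 2 * N < 4 * N := by omega
    have hmid_le_fi : mid.card ≤ f i := by
      apply Finset.card_le_card
      intro j hj
      simp only [hmid, Finset.mem_filter, Finset.mem_univ, true_and] at hj ⊢
      exact ⟨hj.1, by omega, by omega⟩
    have hmid_le_fi1 : mid.card ≤ f (i + 1) := by
      apply Finset.card_le_card
      intro j hj
      simp only [hmid, Finset.mem_filter, Finset.mem_univ, true_and] at hj ⊢
      exact ⟨hj.1, by omega, by omega⟩
    have hfi_le : f i ≤ mid.card + 1 := by
      have hsub : (Finset.univ.filter (fun j : Fin (4 * N) =>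
          c j = true ∧ i ≤ (j : ℕ) ∧ (j : ℕ) < i + 2 * N)) ⊆
          insert ⟨i, hi4⟩ mid := by
        intro j hj
        simp only [Finset.mem_filter, Finset.mem_univ, true_and] at hj
        obtain ⟨h1, h2, h3⟩ := hj
        rcases eq_or_lt_of_le h2 with h | h
        · exact Finset.mem_insert.mpr (Or.inl (Fin.ext h.symm))
        · exact Finset.mem_insert_of_mem (by
            simp only [hmid, Finset.mem_filter, Finset.mem_univ, true_and]
            exact ⟨h1, by omega, h3⟩)
      calc f i ≤ (insert (⟨i, hi4⟩ : Fin (4 * N)) mid).card := Finset.card_le_card hsub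
        _ ≤ mid.card + 1 := Finset.card_insert_le _ _
    have hfi1_le : f (i + 1) ≤ mid.card + 1 := by
      have hsub : (Finset.univ.filter (fun j : Fin (4 * N) =>
          c j = true ∧ i + 1 ≤ (j : ℕ) ∧ (j : ℕ) < i + 1 + 2 * N)) ⊆
          insert ⟨i + 2 * N, hi4'⟩ mid := by
        intro j hj
        simp only [Finset.mem_filter, Finset.mem_univ, true_and] at hj
        obtain ⟨h1, h2, h3⟩ := hj
        rcases lt_or_ge (j : ℕ) (i + 2 * N) with h | h
        · exact Finset.mem_insert_of_mem (by
            simp only [hmid, Finset.mem_filter, Finset.mem_univ, true_and]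
            exact ⟨h1, h2, h⟩)
        · exact Finset.mem_insert.mpr (Or.inl (Fin.ext (show (j : ℕ) = i + 2 * N by omega)))
      calc f (i + 1) ≤ (insert (⟨i + 2 * N, hi4'⟩ : Fin (4 * N)) mid).card :=
            Finset.card_le_card hsub
        _ ≤ mid.card + 1 := Finset.card_insert_le _ _
    omega
  rcases le_or_gt (f 0) N with h0 | h0
  · obtain ⟨i, hi, hfi⟩ := ivt_up f N (2 * N) (fun n hn => (hstep n hn).1) h0 (by omega)
    exact ⟨i, by omega, hfi⟩
  · obtain ⟨i, hi, hfi⟩ := ivt_down f N (2 * N) (fun n hn => (hstep n hn).2) (by omega)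
      (by omega)
    exact ⟨i, by omega, hfi⟩
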